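/- arXiv:2210.04375 — 2 statements merged into one kernel-verified Lean document; each statement's English description precedes it below -/
import Mathlib

section
/- Let d ≥ 1, τ > 0, let A : ℝ^d → ℝ^d be continuously differentiable with A(0) = 0 and Lipschitz with constant K (i.e. |A(x)−A(y)| ≤ K|x−y| for all x,y), and let V : ℝ^d → ℝ be continuously differentiable and bounded. Suppose that for every (x,ξ) ∈ ℝ^d × ℝ^d there are differentiable curves t ↦ X(t,x,ξ), Ξ(t,x,ξ) on [0,τ] solving Newton's magnetic system X' = Ξ + A(X), Ξ_k' = −∑_j ∂_{x_k}A_j(X)(Ξ_j + A_j(X)) − X_k − ∂_{x_k}V(X) with initial data X(0)=x, Ξ(0)=ξ, jointly measurable in (x,ξ). Let f^in be a probability density on ℝ^d × ℝ^d with finite second moments, i.e. ∫∫ (|x|² + |ξ|²) f^in(x,ξ) dx dξ < ∞. Then there is a constant C > 0, depending only on K, such that for all t ∈ [0,τ]: ∫∫ (|X(t,x,ξ)|² + |Ξ(t,x,ξ)|²) f^in(x,ξ) dx dξ ≤ C ( ∫∫ (|x|² + |ξ|²) f^in(x,ξ) dx dξ + sup_{x∈ℝ^d}|V(x)| ). 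-/
open MeasureTheory Set

private lemma euclid_decomp {d : ℕ} (v : EuclideanSpace ℝ (Fin d)) :
    v = ∑ j, v j • EuclideanSpace.single j 1 := by
  have := ((EuclideanSpace.basisFun (Fin d) ℝ).sum_repr v).symm
  simpa [EuclideanSpace.basisFun_apply, EuclideanSpace.basisFun_repr] using this

private lemma clm_apply_sum {d : ℕ} (L : EuclideanSpace ℝ (Fin d) →L[ℝ] ℝ)
    (v : EuclideanSpace ℝ (Fin d)) :
    L v = ∑ j, v j * L (EuclideanSpace.single j 1) := by
  conv_lhs => rw [euclid_decomp v]
  rw [map_sum]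
  simp [smul_eq_mul]

private lemma euclid_norm_sq {d : ℕ} (v : EuclideanSpace ℝ (Fin d)) :
    ‖v‖ ^ 2 = ∑ k, v k * v k := by
  rw [EuclideanSpace.norm_eq, Real.sq_sqrt (by positivity)]
  refine Finset.sum_congr rfl fun k _ => by
    rw [Real.norm_eq_abs, sq_abs, sq]

set_option maxHeartbeats 1000000 in
/-- **Propagation of finite second moments for the magnetic Liouville equation.**
If `f^in` is a probability density on `ℝ^d × ℝ^d` with finite second moments, and
`(X(t,x,ξ), Ξ(t,x,ξ))` is the flow of Newton's magnetic system on `[0,τ]`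
(with `A` Lipschitz with constant `K`, `A(0)=0`, and `V` bounded and `C¹`),
then there is a constant `C > 0` depending only on `K` with
`∫∫ (|X(t)|² + |Ξ(t)|²) f^in ≤ C (∫∫ (|x|²+|ξ|²) f^in + sup |V|)` for all `t ∈ [0,τ]`. -/
theorem second_moments_propagation (K : ℝ) (hK : 0 ≤ K) :
    ∃ C : ℝ, 0 < C ∧
      ∀ (d : ℕ), 1 ≤ d →
      ∀ (τ : ℝ), 0 < τ →
      ∀ (A : EuclideanSpace ℝ (Fin d) → EuclideanSpace ℝ (Fin d)),
        ContDiff ℝ 1 A → A 0 = 0 →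
        (∀ x y, ‖A x - A y‖ ≤ K * ‖x - y‖) →
      ∀ (V : EuclideanSpace ℝ (Fin d) → ℝ),
        ContDiff ℝ 1 V → BddAbove (Set.range fun x => |V x|) →
      ∀ (X Ξ : ℝ → (EuclideanSpace ℝ (Fin d) × EuclideanSpace ℝ (Fin d)) →
          EuclideanSpace ℝ (Fin d)),
        (∀ p, X 0 p = p.1) → (∀ p, Ξ 0 p = p.2) →
        (∀ p, ∀ t ∈ Icc (0:ℝ) τ, HasDerivAt (fun s => X s p) (Ξ t p + A (X t p)) t) →
        (∀ p, ∀ t ∈ Icc (0:ℝ) τ, ∀ k : Fin d, HasDerivAt (fun s => Ξ s p k)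
          (-(∑ j : Fin d, fderiv ℝ (fun x => A x j) (X t p) (EuclideanSpace.single k 1)
              * (Ξ t p j + A (X t p) j)) - X t p k
            - fderiv ℝ V (X t p) (EuclideanSpace.single k 1)) t) →
        (∀ t, Measurable fun p => (X t p, Ξ t p)) →
      ∀ (f : EuclideanSpace ℝ (Fin d) × EuclideanSpace ℝ (Fin d) → ℝ),
        (∀ p, 0 ≤ f p) → Integrable f → (∫ p, f p) = 1 →
        Integrable (fun p => (‖p.1‖^2 + ‖p.2‖^2) * f p) →
      ∀ t ∈ Icc (0:ℝ) τ,
        (∫ p, (‖X t p‖^2 + ‖Ξ t p‖^2) * f p)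
          ≤ C * ((∫ p, (‖p.1‖^2 + ‖p.2‖^2) * f p) + ⨆ x, |V x|) := by
  refine ⟨(2 + 2*K^2) * (2*K^2 + 4), by positivity, ?_⟩
  intro d hd τ hτ A hA hA0 hAL V hV hVbdd X Ξ hX0 hΞ0 hXd hΞd hmeas f hf0 hfint hf1 hmom t ht
  set C : ℝ := (2 + 2*K^2) * (2*K^2 + 4) with hCdef
  set Mv : ℝ := ⨆ x, |V x| with hMvdef
  have hVle : ∀ x, |V x| ≤ Mv := fun x => le_ciSup hVbdd x
  have hMv0 : (0:ℝ) ≤ Mv := le_trans (abs_nonneg _) (hVle 0)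
  have hAle : ∀ x, ‖A x‖ ≤ K * ‖x‖ := by
    intro x
    have := hAL x 0
    simpa [hA0] using this
  -- pointwise bound
  have key : ∀ p, ‖X t p‖^2 + ‖Ξ t p‖^2 ≤ C * ((‖p.1‖^2 + ‖p.2‖^2) + Mv) := by
    intro p
    set E : ℝ → ℝ := fun s =>
      (∑ k, (Ξ s p k + A (X s p) k) * (Ξ s p k + A (X s p) k))
      + ((∑ k, X s p k * X s p k) + 2 * V (X s p)) with hEdef
    have hder : ∀ u ∈ Icc (0:ℝ) τ, HasDerivAt E 0 u := by
      intro u hu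
      set w : Fin d → ℝ := fun k => Ξ u p k + A (X u p) k with hwdef
      set a : Fin d → Fin d → ℝ :=
        fun k j => fderiv ℝ (fun x => A x j) (X u p) (EuclideanSpace.single k 1) with hadef
      set g : Fin d → ℝ := fun k => fderiv ℝ V (X u p) (EuclideanSpace.single k 1) with hgdef
      have hXder : HasDerivAt (fun s => X s p) (Ξ u p + A (X u p)) u := hXd p u hu
      have hXk : ∀ k, HasDerivAt (fun s => X s p k) (w k) u := by
        intro k
        exact (EuclideanSpace.proj k).hasFDerivAt.comp_hasDerivAt u hXder
      have hAdiff : ∀ k, DifferentiableAt ℝ (fun x => A x k) (X u p) := by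
        intro k
        exact (EuclideanSpace.proj k).differentiableAt.comp (X u p)
          ((hA.differentiable one_ne_zero) (X u p))
      have hVdiff : DifferentiableAt ℝ V (X u p) := (hV.differentiable one_ne_zero) _
      have hAder : ∀ k, HasDerivAt (fun s => A (X s p) k) (∑ j, w j * a j k) u := by
        intro k
        have h := (hAdiff k).hasFDerivAt.comp_hasDerivAt u hXder
        rw [clm_apply_sum] at h
        exact h
      have hVder : HasDerivAt (fun s => V (X s p)) (∑ j, w j * g j) u := by
        have h := hVdiff.hasFDerivAt.comp_hasDerivAt u hXder
        rw [clm_apply_sum] at h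
        exact h
      have hw : ∀ k, HasDerivAt (fun s => Ξ s p k + A (X s p) k)
          ((-(∑ j, a k j * w j) - X u p k - g k) + ∑ j, w j * a j k) u := by
        intro k
        exact (hΞd p u hu k).add (hAder k)
      set D : Fin d → ℝ := fun k => (-(∑ j, a k j * w j) - X u p k - g k) + ∑ j, w j * a j k
        with hDdef
      have hEder : HasDerivAt E
          ((∑ k, (D k * w k + w k * D k))
            + ((∑ k, (w k * X u p k + X u p k * w k)) + 2 * (∑ j, w j * g j))) u := by
        exact (HasDerivAt.fun_sum fun k _ => (hw k).mul (hw k)).add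
          ((HasDerivAt.fun_sum fun k _ => (hXk k).mul (hXk k)).add (hVder.const_mul 2))
      have hS : ((∑ k, (D k * w k + w k * D k))
            + ((∑ k, (w k * X u p k + X u p k * w k)) + 2 * (∑ j, w j * g j))) = 0 := by
        have e1 : ∀ k : Fin d, D k * w k + w k * D k
            = (∑ j, 2 * w k * (w j * a j k - a k j * w j)) - 2 * w k * X u p k
              - 2 * w k * g k := by
          intro k
          have : (∑ j, 2 * w k * (w j * a j k - a k j * w j))
              = 2 * w k * (∑ j, (w j * a j k - a k j * w j)) := (Finset.mul_sum _ _ _).symm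
          rw [this, Finset.sum_sub_distrib, hDdef]
          ring
        rw [Finset.sum_congr rfl fun k _ => e1 k, Finset.sum_sub_distrib,
          Finset.sum_sub_distrib]
        have hT : (∑ k, ∑ j, 2 * w k * (w j * a j k - a k j * w j)) = 0 := by
          have h2 : (∑ k, ∑ j, 2 * w k * (w j * a j k - a k j * w j))
              = ∑ j, ∑ k, 2 * w k * (w j * a j k - a k j * w j) := Finset.sum_comm
          have h3 : (∑ j, ∑ k, 2 * w k * (w j * a j k - a k j * w j))
              = -∑ k, ∑ j, 2 * w k * (w j * a j k - a k j * w j) := by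
            rw [← Finset.sum_neg_distrib]
            refine Finset.sum_congr rfl fun x _ => ?_
            rw [← Finset.sum_neg_distrib]
            refine Finset.sum_congr rfl fun y _ => by ring
          linarith
        have hx : (∑ k, 2 * w k * X u p k) = ∑ k, (w k * X u p k + X u p k * w k) :=
          Finset.sum_congr rfl fun k _ => by ring
        have hg2 : (∑ k, 2 * w k * g k) = 2 * ∑ j, w j * g j := by
          rw [Finset.mul_sum]
          exact Finset.sum_congr rfl fun k _ => by ring
        linarith
      rw [← hS]
      exact hEder
    have hcont : ContinuousOn E (Icc 0 τ) := fun u hu =>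
      ((hder u hu).continuousAt.continuousWithinAt)
    have hconst : E t = E 0 :=
      constant_of_has_deriv_right_zero hcont
        (fun u hu => ((hder u (Ico_subset_Icc_self hu)).hasDerivWithinAt)) t ht
    -- rewrite in terms of norms
    have n1 : (∑ k, (Ξ t p k + A (X t p) k) * (Ξ t p k + A (X t p) k))
        = ‖Ξ t p + A (X t p)‖ ^ 2 := (euclid_norm_sq (Ξ t p + A (X t p))).symm
    have n2 : (∑ k, X t p k * X t p k) = ‖X t p‖ ^ 2 := (euclid_norm_sq (X t p)).symm
    have n3 : (∑ k, (Ξ 0 p k + A (X 0 p) k) * (Ξ 0 p k + A (X 0 p) k))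
        = ‖p.2 + A p.1‖ ^ 2 := by
      rw [hX0 p, hΞ0 p]
      exact (euclid_norm_sq (p.2 + A p.1)).symm
    have n4 : (∑ k, X 0 p k * X 0 p k) = ‖p.1‖ ^ 2 := by
      rw [hX0 p]; exact (euclid_norm_sq p.1).symm
    have hEt : ‖Ξ t p + A (X t p)‖ ^ 2 + (‖X t p‖ ^ 2 + 2 * V (X t p))
        = ‖p.2 + A p.1‖ ^ 2 + (‖p.1‖ ^ 2 + 2 * V p.1) := by
      have := hconst
      rw [hEdef] at this
      simp only at this
      rw [n1, n2, n3, n4] at this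
      rw [hX0 p] at this
      exact this
    -- inequalities
    have hV1 : -Mv ≤ V (X t p) := neg_le_of_abs_le (hVle _)
    have hV2 : V p.1 ≤ Mv := le_of_abs_le (hVle _)
    have htr1 : ‖p.2 + A p.1‖ ≤ ‖p.2‖ + ‖A p.1‖ := norm_add_le _ _
    have htr2 : ‖Ξ t p‖ ≤ ‖Ξ t p + A (X t p)‖ + ‖A (X t p)‖ := by
      have : Ξ t p = (Ξ t p + A (X t p)) - A (X t p) := by abel
      calc ‖Ξ t p‖ = ‖(Ξ t p + A (X t p)) - A (X t p)‖ := by rw [← this]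
        _ ≤ _ := norm_sub_le _ _
    have hA1 := hAle p.1
    have hA2 := hAle (X t p)
    have h1 : ‖p.2 + A p.1‖ ^ 2 ≤ 2 * ‖p.2‖^2 + 2 * K^2 * ‖p.1‖^2 := by
      nlinarith [norm_nonneg (p.2 + A p.1), norm_nonneg p.2, norm_nonneg (A p.1),
        norm_nonneg p.1, sq_nonneg (‖p.2‖ - ‖A p.1‖)]
    have h2 : ‖Ξ t p‖ ^ 2 ≤ 2 * ‖Ξ t p + A (X t p)‖^2 + 2 * K^2 * ‖X t p‖^2 := by
      nlinarith [norm_nonneg (Ξ t p), norm_nonneg (Ξ t p + A (X t p)),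
        norm_nonneg (A (X t p)), norm_nonneg (X t p),
        sq_nonneg (‖Ξ t p + A (X t p)‖ - ‖A (X t p)‖)]
    have h3 : ‖Ξ t p + A (X t p)‖^2 + ‖X t p‖^2
        ≤ 2 * ‖p.2‖^2 + 2 * K^2 * ‖p.1‖^2 + ‖p.1‖^2 + 4 * Mv := by linarith
    have hq1 : (0:ℝ) ≤ K^2 * ‖Ξ t p + A (X t p)‖^2 :=
      mul_nonneg (sq_nonneg K) (sq_nonneg _)
    have hq2 : (0:ℝ) ≤ K^2 * ‖p.2‖^2 := mul_nonneg (sq_nonneg K) (sq_nonneg _)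
    have hq3 : (0:ℝ) ≤ K^2 * Mv := mul_nonneg (sq_nonneg K) hMv0
    have h4 : ‖X t p‖^2 + ‖Ξ t p‖^2
        ≤ (2 + 2*K^2) * (‖Ξ t p + A (X t p)‖^2 + ‖X t p‖^2) := by
      have expand : (2 + 2*K^2) * (‖Ξ t p + A (X t p)‖^2 + ‖X t p‖^2)
          = 2*‖Ξ t p + A (X t p)‖^2 + 2*‖X t p‖^2 + 2*(K^2 * ‖Ξ t p + A (X t p)‖^2)
            + 2*K^2*‖X t p‖^2 := by ring
      rw [expand]
      have hx2 : (0:ℝ) ≤ ‖X t p‖^2 := sq_nonneg _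
      linarith
    have h5 : (2 + 2*K^2) * (‖Ξ t p + A (X t p)‖^2 + ‖X t p‖^2)
        ≤ (2 + 2*K^2) * ((2*K^2 + 4) * ((‖p.1‖^2 + ‖p.2‖^2) + Mv)) := by
      apply mul_le_mul_of_nonneg_left _ (by positivity)
      have expand : (2*K^2 + 4) * ((‖p.1‖^2 + ‖p.2‖^2) + Mv)
          = 2*K^2*‖p.1‖^2 + 2*(K^2*‖p.2‖^2) + 2*(K^2*Mv) + 4*‖p.1‖^2 + 4*‖p.2‖^2
            + 4*Mv := by ring
      rw [expand]
      have hx1 : (0:ℝ) ≤ ‖p.1‖^2 := sq_nonneg _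
      have hx2 : (0:ℝ) ≤ ‖p.2‖^2 := sq_nonneg _
      linarith
    have h6 : (2 + 2*K^2) * ((2*K^2 + 4) * ((‖p.1‖^2 + ‖p.2‖^2) + Mv))
        = C * ((‖p.1‖^2 + ‖p.2‖^2) + Mv) := by rw [hCdef]; ring
    linarith
  -- integration
  have hCpos : (0:ℝ) < C := by rw [hCdef]; positivity
  have hmeasL : AEStronglyMeasurable (fun p => (‖X t p‖^2 + ‖Ξ t p‖^2) * f p) volume := by
    refine AEStronglyMeasurable.mul ?_ hfint.aestronglyMeasurable
    have hc : Continuous fun q : EuclideanSpace ℝ (Fin d) × EuclideanSpace ℝ (Fin d) =>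
        ‖q.1‖^2 + ‖q.2‖^2 := by fun_prop
    exact (hc.measurable.comp (hmeas t)).aestronglyMeasurable
  have hRint : Integrable (fun p => C * ((‖p.1‖^2 + ‖p.2‖^2) + Mv) * f p) := by
    have h := ((hmom.add (hfint.const_mul Mv)).const_mul C)
    refine h.congr ?_
    refine ae_of_all _ fun p => ?_
    simp only [Pi.add_apply]
    ring
  have hLint : Integrable (fun p => (‖X t p‖^2 + ‖Ξ t p‖^2) * f p) := by
    refine hRint.mono' hmeasL (ae_of_all _ fun p => ?_)
    have h0 : 0 ≤ (‖X t p‖^2 + ‖Ξ t p‖^2) * f p :=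
      mul_nonneg (by positivity) (hf0 p)
    rw [Real.norm_eq_abs, abs_of_nonneg h0]
    exact mul_le_mul_of_nonneg_right (key p) (hf0 p)
  have hle : (∫ p, (‖X t p‖^2 + ‖Ξ t p‖^2) * f p)
      ≤ ∫ p, C * ((‖p.1‖^2 + ‖p.2‖^2) + Mv) * f p := by
    refine integral_mono hLint hRint fun p => ?_
    exact mul_le_mul_of_nonneg_right (key p) (hf0 p)
  have hcalc : (∫ p, C * ((‖p.1‖^2 + ‖p.2‖^2) + Mv) * f p)
      = C * ((∫ p, (‖p.1‖^2 + ‖p.2‖^2) * f p) + Mv) := by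
    have hrw : (fun p : EuclideanSpace ℝ (Fin d) × EuclideanSpace ℝ (Fin d) =>
        C * ((‖p.1‖^2 + ‖p.2‖^2) + Mv) * f p)
        = fun p => C * ((‖p.1‖^2 + ‖p.2‖^2) * f p + Mv * f p) := by
      funext p; ring
    rw [hrw, integral_const_mul, integral_add hmom (hfint.const_mul Mv),
      integral_const_mul, hf1, mul_one]
  rw [hcalc] at hle
  exact hle
end

section
/- Let d ≥ 1, T > 0, let X : [0,T] × (ℝ^d × ℝ^d) → ℝ^d be continuous, let K ⊆ ℝ^d × ℝ^d be compact and Ω ⊆ ℝ^d be open. Assume the Bardos–Lebeau–Rauch geometric condition: for every (x,ξ) ∈ K there exists t ∈ (0,T) such that X(t,x,ξ) ∈ Ω. Then inf_{(x,ξ)∈K} ∫_0^T 1_Ω(X(t,x,ξ)) dt > 0, where 1_Ω is the indicator function of Ω. -/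
open MeasureTheory Set

lemma aux_integral_ge {E : Type*} [TopologicalSpace E]
    (T a b : ℝ) (ha : 0 < a) (hab : a < b) (hbT : b < T)
    (g : ℝ → E) (hg : ContinuousOn g (Icc 0 T)) (Ω : Set E) (hΩ : IsOpen Ω)
    (h : ∀ t ∈ Ioo a b, g t ∈ Ω) :
    b - a ≤ ∫ t in (0:ℝ)..T, Set.indicator Ω (fun _ => (1:ℝ)) (g t) := by
  have hT : (0:ℝ) ≤ T := le_of_lt (lt_trans (lt_trans ha hab) hbT)
  obtain ⟨u, hu, huS⟩ := (continuousOn_iff'.1 hg) Ω hΩ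
  set S : Set ℝ := u ∩ Icc 0 T with hS
  have hSm : MeasurableSet S := hu.measurableSet.inter measurableSet_Icc
  set f : ℝ → ℝ := fun t => Set.indicator Ω (fun _ => (1:ℝ)) (g t) with hf
  have hfeq : EqOn f (Set.indicator S (fun _ => (1:ℝ))) (Ioc 0 T) := by
    intro t ht
    have htI : t ∈ Icc 0 T := Ioc_subset_Icc_self ht
    by_cases hgt : g t ∈ Ω
    · have : t ∈ S := by
        rw [← huS]; exact ⟨hgt, htI⟩
      simp [hf, Set.indicator_of_mem hgt, Set.indicator_of_mem this]
    · have : t ∉ S := by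
        rw [← huS]; exact fun hc => hgt hc.1
      simp [hf, Set.indicator_of_notMem hgt, Set.indicator_of_notMem this]
  have hSfin : volume S ≠ ⊤ := by
    refine ne_top_of_le_ne_top ?_ (measure_mono (inter_subset_right))
    simp
  have hint2 : IntegrableOn (Set.indicator S (fun _ => (1:ℝ))) (Ioc 0 T) := by
    refine (integrable_indicator_iff hSm).2 ?_ |>.integrableOn
    exact integrableOn_const hSfin
  have hint1 : IntegrableOn f (Ioc 0 T) :=
    (integrableOn_congr_fun hfeq measurableSet_Ioc).2 hint2
  have hintlow : IntegrableOn (Set.indicator (Ioo a b) (fun _ => (1:ℝ))) (Ioc 0 T) := by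
    refine (integrable_indicator_iff measurableSet_Ioo).2 ?_ |>.integrableOn
    exact integrableOn_const (by simp)
  have hmono : ∀ t ∈ Ioc 0 T,
      Set.indicator (Ioo a b) (fun _ => (1:ℝ)) t ≤ f t := by
    intro t ht
    by_cases htab : t ∈ Ioo a b
    · rw [Set.indicator_of_mem htab, hf]
      simp [Set.indicator_of_mem (h t htab)]
    · rw [Set.indicator_of_notMem htab]
      exact Set.indicator_nonneg (fun _ _ => zero_le_one) _
  have h1 : ∫ t in Ioc 0 T, Set.indicator (Ioo a b) (fun _ => (1:ℝ)) t
      ≤ ∫ t in Ioc 0 T, f t :=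
    setIntegral_mono_on hintlow hint1 measurableSet_Ioc hmono
  have h2 : ∫ t in Ioc 0 T, Set.indicator (Ioo a b) (fun _ => (1:ℝ)) t = b - a := by
    rw [setIntegral_indicator measurableSet_Ioo]
    have : Ioc (0:ℝ) T ∩ Ioo a b = Ioo a b := by
      apply inter_eq_self_of_subset_right
      exact fun t ht => ⟨lt_trans ha ht.1, le_of_lt (lt_trans ht.2 hbT)⟩
    rw [this]
    simp [Real.volume_Ioo, ENNReal.toReal_ofReal (le_of_lt (sub_pos.2 hab)),
      le_of_lt hab]
  rw [intervalIntegral.integral_of_le hT]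
  rw [h2] at h1
  exact h1

/-- **Positivity of the averaged observation time under the Bardos–Lebeau–Rauch
geometric condition:** if `X` is continuous on `[0,T] × (ℝ^d × ℝ^d)`, `K` is compact,
`Ω` is open, and for every `(x,ξ) ∈ K` there is `t ∈ (0,T)` with `X(t,x,ξ) ∈ Ω`, then
`inf_{(x,ξ)∈K} ∫₀ᵀ 1_Ω(X(t,x,ξ)) dt > 0`. -/
theorem observation_time_positive
    (d : ℕ) (hd : 1 ≤ d) (T : ℝ) (hT : 0 < T)
    (X : ℝ → (EuclideanSpace ℝ (Fin d) × EuclideanSpace ℝ (Fin d)) →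
      EuclideanSpace ℝ (Fin d))
    (hX : ContinuousOn (fun q : ℝ × (EuclideanSpace ℝ (Fin d) × EuclideanSpace ℝ (Fin d)) =>
      X q.1 q.2) (Icc (0:ℝ) T ×ˢ univ))
    (K : Set (EuclideanSpace ℝ (Fin d) × EuclideanSpace ℝ (Fin d))) (hK : IsCompact K)
    (Ω : Set (EuclideanSpace ℝ (Fin d))) (hΩ : IsOpen Ω)
    (hGC : ∀ p ∈ K, ∃ t ∈ Ioo (0:ℝ) T, X t p ∈ Ω) :
    ∃ c : ℝ, 0 < c ∧ ∀ p ∈ K,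
      c ≤ ∫ t in (0:ℝ)..T, Set.indicator Ω (fun _ => (1:ℝ)) (X t p) := by
  -- Step 1: local data at each point of K
  have key : ∀ p ∈ K, ∃ a b : ℝ, 0 < a ∧ a < b ∧ b < T ∧
      ∃ U : Set (EuclideanSpace ℝ (Fin d) × EuclideanSpace ℝ (Fin d)), U ∈ nhds p ∧ ∀ q ∈ U, ∀ t ∈ Ioo a b, X t q ∈ Ω := by
    intro p hp
    obtain ⟨t₀, ht₀, hXt₀⟩ := hGC p hp
    -- continuity at (t₀, p)
    have hmemnhds : Icc (0:ℝ) T ×ˢ (univ : Set (EuclideanSpace ℝ (Fin d) × EuclideanSpace ℝ (Fin d))) ∈ nhds (t₀, p) := by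
      refine mem_nhds_iff.2 ⟨Ioo 0 T ×ˢ univ, ?_, (isOpen_Ioo.prod isOpen_univ), ⟨ht₀, mem_univ p⟩⟩
      exact prod_mono Ioo_subset_Icc_self le_rfl
    have hca : ContinuousAt (fun q : ℝ × (EuclideanSpace ℝ (Fin d) × EuclideanSpace ℝ (Fin d)) => X q.1 q.2) (t₀, p) :=
      (hX (t₀, p) ⟨Ioo_subset_Icc_self ht₀, mem_univ p⟩).continuousAt hmemnhds
    have hW : (fun q : ℝ × (EuclideanSpace ℝ (Fin d) × EuclideanSpace ℝ (Fin d)) => X q.1 q.2) ⁻¹' Ω ∈ nhds (t₀, p) :=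
      hca.preimage_mem_nhds (hΩ.mem_nhds hXt₀)
    obtain ⟨s, hs, u, hu, hsu⟩ := mem_nhds_prod_iff.1 hW
    obtain ⟨ε, hε, hball⟩ := Metric.mem_nhds_iff.1 hs
    set ε' : ℝ := min ε (min (t₀ / 2) ((T - t₀) / 2)) with hε'
    have hε'pos : 0 < ε' := by
      refine lt_min hε (lt_min (by linarith [ht₀.1]) (by linarith [ht₀.2]))
    refine ⟨t₀ - ε', t₀ + ε', ?_, by linarith, ?_, u, hu, ?_⟩
    · have : ε' ≤ t₀ / 2 := le_trans (min_le_right _ _) (min_le_left _ _)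
      linarith [ht₀.1]
    · have : ε' ≤ (T - t₀) / 2 := le_trans (min_le_right _ _) (min_le_right _ _)
      linarith
    · intro q hq t ht
      have hεle : ε' ≤ ε := min_le_left _ _
      have hts : t ∈ Metric.ball t₀ ε := by
        rw [Metric.mem_ball, Real.dist_eq, abs_lt]
        constructor <;> [linarith [ht.1]; linarith [ht.2]]
      exact hsu (Set.mk_mem_prod (hball hts) hq)
  choose a b ha hab hbT U hU hmem using key
  -- Step 2: finite subcover
  obtain ⟨t, ht⟩ := hK.elim_nhds_subcover' (fun p hp => U p hp) (fun p hp => hU p hp)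
  by_cases htne : t.Nonempty
  · set c : ℝ := (t.image fun x : K => b x.1 x.2 - a x.1 x.2).min' (htne.image _) with hc
    have hcpos : 0 < c := by
      have hcmem : c ∈ t.image fun x : K => b x.1 x.2 - a x.1 x.2 :=
        Finset.min'_mem _ _
      obtain ⟨x, hx, hxeq⟩ := Finset.mem_image.1 hcmem
      rw [← hxeq]
      linarith [hab x.1 x.2]
    refine ⟨c, hcpos, ?_⟩
    intro p hp
    obtain ⟨x, hx, hpx⟩ := mem_iUnion₂.1 (ht hp)
    have hcle : c ≤ b x.1 x.2 - a x.1 x.2 :=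
      Finset.min'_le _ _ (Finset.mem_image_of_mem _ hx)
    refine le_trans hcle ?_
    have hg : ContinuousOn (fun s => X s p) (Icc 0 T) := by
      have : (fun s => X s p) = (fun q : ℝ × (EuclideanSpace ℝ (Fin d) × EuclideanSpace ℝ (Fin d)) => X q.1 q.2) ∘ (fun s => (s, p)) := rfl
      rw [this]
      exact hX.comp (Continuous.continuousOn (by fun_prop))
        (fun s hs => ⟨hs, mem_univ p⟩)
    exact aux_integral_ge T _ _ (ha x.1 x.2) (hab x.1 x.2) (hbT x.1 x.2)
      _ hg Ω hΩ (fun s hs => hmem x.1 x.2 p hpx s hs)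
  · refine ⟨1, one_pos, fun p hp => absurd (ht hp) ?_⟩
    rw [Finset.not_nonempty_iff_eq_empty.1 htne]
    simp
end
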